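/- Let M be a k×k real symmetric negative definite matrix with M_{ij} ≥ 0 for i ≠ j (i.e., minus an M-matrix structure). If a ∈ ℝ^k satisfies (M a)_i ≥ 0 for all i, then a ≤ 0 componentwise. -/

import Mathlib

/-- (Negativity lemma.) If `M` is symmetric negative definite with
nonnegative off-diagonal entries and `M a ≥ 0` componentwise, then `a ≤ 0`
componentwise. -/
theorem negativity_lemma
    (k : ℕ) (M : Matrix (Fin k) (Fin k) ℝ)
    (hsym : M.IsSymm) (hneg : (-M).PosDef)
    (hoff : ∀ i j, i ≠ j → 0 ≤ M i j)
    (a : Fin k → ℝ) (h : ∀ i, 0 ≤ M.mulVec a i) :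
    ∀ i, a i ≤ 0 := by
  set p : Fin k → ℝ := fun i => max (a i) 0 with hp
  set n : Fin k → ℝ := fun i => max (-a i) 0 with hn
  have hpn : ∀ i, a i = p i - n i := by
    intro i; simp only [hp, hn]
    rcases le_or_gt (a i) 0 with h' | h'
    · rw [max_eq_right h', max_eq_left (by linarith)]; ring
    · rw [max_eq_left h'.le, max_eq_right (by linarith)]; ring
  have hp0 : ∀ i, 0 ≤ p i := fun i => le_max_right _ _
  have hn0 : ∀ i, 0 ≤ n i := fun i => le_max_right _ _
  have hdisj : ∀ i, p i * n i = 0 := by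
    intro i; rcases le_or_gt (a i) 0 with h' | h'
    · have : p i = 0 := max_eq_right h'
      rw [this, zero_mul]
    · have : n i = 0 := max_eq_right (by linarith)
      rw [this, mul_zero]
  -- show p = 0
  have hpz : p = 0 := by
    by_contra hne
    have hpos := hneg.dotProduct_mulVec_pos hne
    simp only [star_trivial, Matrix.neg_mulVec, dotProduct_neg] at hpos
    -- hpos : 0 < -(p ⬝ᵥ M *ᵥ p), i.e., p ⬝ᵥ M *ᵥ p < 0
    have key : 0 ≤ dotProduct p (M.mulVec p) := by
      have hfun : p = a + n := funext fun i => by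
        have := hpn i; simp only [Pi.add_apply]; linarith
      have hsplit : M.mulVec p = M.mulVec a + M.mulVec n := by
        rw [hfun, Matrix.mulVec_add]
      rw [hsplit, dotProduct_add]
      have h1 : 0 ≤ dotProduct p (M.mulVec a) := by
        apply Finset.sum_nonneg
        intro i _
        exact mul_nonneg (hp0 i) (h i)
      have h2 : 0 ≤ dotProduct p (M.mulVec n) := by
        have heq : dotProduct p (M.mulVec n)
            = ∑ i, ∑ j, p i * (M i j * n j) := by
          simp [dotProduct, Matrix.mulVec, Finset.mul_sum]
        rw [heq]
        apply Finset.sum_nonneg; intro i _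
        apply Finset.sum_nonneg; intro j _
        by_cases hij : i = j
        · subst hij
          have heq2 : p i * (M i i * n i) = M i i * (p i * n i) := by ring
          rw [heq2, hdisj i, mul_zero]
        · exact mul_nonneg (hp0 i) (mul_nonneg (hoff i j hij) (hn0 j))
      linarith
    linarith
  intro i
  have h1 : p i = 0 := congrFun hpz i
  have h2 : a i ≤ p i := le_max_left _ _
  linarith
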